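/- Assume α ≥ 5, (s, σ, w, η, x, u) ∈ Δ, y ∈ Σ_k with y ≠ x, and Π(s, σ, w, η, x, u, y) ≠ ∅. Then there exists a prefix η̄ of η such that (s, σ, w, η̄, x, uy) ∈ Δ. -/

import Mathlib

namespace PowerFreeFormalization

variable {A : Type*}

/-- `p` is the `β`-power `r^β` of the nonempty word `r`:
`|p| = β * |r|` and `p` is a prefix of `r r r ⋯`. -/
def IsPow (r p : List A) (β : ℚ) : Prop :=
  r ≠ [] ∧ (p.length : ℚ) = β * r.length ∧
    p <+: (List.replicate p.length r).flatten

/-- A finite word `w` is `α`-power free: no factor of `w` is an `r^β` with `β ≥ α`. -/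
def PowFree (α : ℚ) (w : List A) : Prop :=
  ∀ (r p : List A) (β : ℚ), α ≤ β → IsPow r p β → ¬ p <:+: w

/-- `p` is a finite factor of the right-infinite word `f : ℕ → A`, occurring at position `i`. -/
def OccursR (f : ℕ → A) (p : List A) (i : ℕ) : Prop :=
  p = (List.range p.length).map fun j => f (i + j)

/-- `p` is a finite factor of the right-infinite word `f`. -/
def FactorR (f : ℕ → A) (p : List A) : Prop :=
  ∃ i : ℕ, OccursR f p i

/-- A left-infinite word is `g : ℕ → A`, where `g 0` is the rightmost letter,
`g 1` the one before it, etc.  `p` occurs in `g` ending at offset `i` from the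
right end (offset `0` means `p` is a suffix). -/
def OccursL (g : ℕ → A) (p : List A) (i : ℕ) : Prop :=
  p.reverse = (List.range p.length).map fun j => g (i + j)

/-- `p` is a finite factor of the left-infinite word `g`. -/
def FactorL (g : ℕ → A) (p : List A) : Prop :=
  ∃ i : ℕ, OccursL g p i

/-- `p` is a suffix of the left-infinite word `g`. -/
def SuffixL (g : ℕ → A) (p : List A) : Prop :=
  OccursL g p 0

/-- `p` is a finite factor of the bi-infinite word `h : ℤ → A`, at position `i`. -/
def OccursZ (h : ℤ → A) (p : List A) (i : ℤ) : Prop :=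
  p = (List.range p.length).map fun j => h (i + j)

/-- `p` is a finite factor of the bi-infinite word `h`. -/
def FactorZ (h : ℤ → A) (p : List A) : Prop :=
  ∃ i : ℤ, OccursZ h p i

/-- A right-infinite word is `α`-power free iff all its finite factors are. -/
def PowFreeR (α : ℚ) (f : ℕ → A) : Prop :=
  ∀ p, FactorR f p → PowFree α p

/-- A left-infinite word is `α`-power free iff all its finite factors are. -/
def PowFreeL (α : ℚ) (g : ℕ → A) : Prop :=
  ∀ p, FactorL g p → PowFree α p

/-- A bi-infinite word is `α`-power free iff all its finite factors are. -/
def PowFreeZ (α : ℚ) (h : ℤ → A) : Prop :=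
  ∀ p, FactorZ h p → PowFree α p

/-- Appending a finite word `u` on the right end of a left-infinite word `g`,
yielding the left-infinite word `g u`. -/
def appendL (g : ℕ → A) (u : List A) : ℕ → A :=
  fun n => u.reverse.getD n (g (n - u.length))

/-- `p` is a recurrent factor of the right-infinite word `f`
(infinitely many occurrences). -/
def RecR (f : ℕ → A) (p : List A) : Prop :=
  ∀ N : ℕ, ∃ i, N ≤ i ∧ OccursR f p i

/-- `p` is a recurrent factor of the left-infinite word `g`
(infinitely many occurrences). -/
def RecL (g : ℕ → A) (p : List A) : Prop :=
  ∀ N : ℕ, ∃ i, N ≤ i ∧ OccursL g p i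

/-- `p` is a recurrent factor of the bi-infinite word `h`
(infinitely many occurrences). -/
def RecZ (h : ℤ → A) (p : List A) : Prop :=
  {i : ℤ | OccursZ h p i}.Infinite

/-- The bi-infinite word `g m f` obtained by concatenating a left-infinite word `g`,
a finite word `m` (starting at index `0`) and a right-infinite word `f`. -/
def biJoin (g : ℕ → A) (m : List A) (f : ℕ → A) : ℤ → A :=
  fun i => if i < 0 then g (-(i + 1)).toNat
    else m.getD i.toNat (f (i.toNat - m.length))

/-- The set `Γ`:  triples `(w, η, u)` with `w` nonempty and, whenever `|u| ≤ |w|`,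
`|η| ≥ (α+1)·α^(|w|-|u|)·|w|`. -/
def Gamma (α : ℚ) (w η u : List A) : Prop :=
  w ≠ [] ∧ (u.length ≤ w.length →
    (α + 1) * α ^ (w.length - u.length) * (w.length : ℚ) ≤ (η.length : ℚ))

/-- The set `Δ`: 6-tuples `(s, σ, w, η, x, u)` with `s` left-infinite, `w` nonempty,
such that `sσwηxu` is `α`-power free, `(w,η,u) ∈ Γ`, `w` occurs exactly once in `sσw`,
and `x` is not a factor of `s` nor of `u`. -/
def Delta (α : ℚ) (s : ℕ → A) (σ w η : List A) (x : A) (u : List A) : Prop :=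
  w ≠ [] ∧
  PowFreeL α (appendL s (σ ++ w ++ η ++ [x] ++ u)) ∧
  Gamma α w η u ∧
  (∃! i : ℕ, OccursL (appendL s (σ ++ w)) w i) ∧
  ¬ FactorL s [x] ∧ ¬ [x] <:+: u

/-- `(r, β) ∈ Π(s, σ, w, η, x, u, y)`:  `r` nonempty, `β > α` rational, `uy` is
`α`-power free and `r^β` is a suffix of the left-infinite word `sσwηxuy`. -/
def PiCond (α : ℚ) (s : ℕ → A) (σ w η : List A) (x : A) (u : List A) (y : A)
    (r : List A) (β : ℚ) : Prop :=
  r ≠ [] ∧ α < β ∧ PowFree α (u ++ [y]) ∧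
  ∃ p : List A, IsPow r p β ∧ SuffixL (appendL s (σ ++ w ++ η ++ [x] ++ u ++ [y])) p


section Helpers

variable {g : ℕ → A} {L a b v : List A}

lemma appendL_lt {n : ℕ} (h : n < L.length) :
    appendL g L n = L.reverse[n]'(by simpa using h) :=
  List.getD_eq_getElem _ _ (by simpa using h)

lemma appendL_ge {n : ℕ} (h : L.length ≤ n) :
    appendL g L n = g (n - L.length) :=
  List.getD_eq_default _ _ (by simpa using h)

lemma appendL_append (g : ℕ → A) (L₁ L₂ : List A) :
    appendL g (L₁ ++ L₂) = appendL (appendL g L₁) L₂ := by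
  funext n
  by_cases h : n < L₂.length
  · rw [appendL_lt (by simp; omega), appendL_lt h,
      List.getElem_of_eq (List.reverse_append : (L₁ ++ L₂).reverse = _) (by simp; omega)]
    exact List.getElem_append_left (by simpa using h)
  · by_cases h2 : n < L₁.length + L₂.length
    · rw [appendL_lt (by simp; omega), appendL_ge (le_of_not_gt h),
        appendL_lt (by omega),
        List.getElem_of_eq (List.reverse_append : (L₁ ++ L₂).reverse = _) (by simp; omega)]
      rw [List.getElem_append_right (by simpa using le_of_not_gt h)]
      congr 1
      simp
    · rw [appendL_ge (by simp; omega), appendL_ge (le_of_not_gt h),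
        appendL_ge (by omega)]
      congr 1
      simp
      omega

lemma appendL_shift (g : ℕ → A) (a b : List A) (n : ℕ) :
    appendL g (a ++ b) (n + b.length) = appendL g a n := by
  rw [appendL_append, appendL_ge (by omega : b.length ≤ n + b.length)]
  congr 1
  omega

lemma occursL_getElem {g : ℕ → A} {a : List A} {i : ℕ} (h : OccursL g a i)
    {j : ℕ} (hj : j < a.length) :
    a.reverse[j]'(by simpa using hj) = g (i + j) := by
  rw [List.getElem_of_eq h (by simpa using hj)]
  simp

lemma occursL_of_getElem {g : ℕ → A} {a : List A} {i : ℕ}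
    (h : ∀ j (hj : j < a.length), a.reverse[j]'(by simpa using hj) = g (i + j)) :
    OccursL g a i := by
  apply List.ext_getElem (by simp)
  intro n h1 h2
  simpa using h n (by simpa using h1)

lemma suffixL_appendL (g : ℕ → A) (L : List A) : SuffixL (appendL g L) L := by
  apply occursL_of_getElem
  intro j hj
  rw [appendL_lt (show 0 + j < L.length by omega)]
  congr 1
  omega

lemma suffixL_mono (h : SuffixL g L) (hv : v <:+ L) : SuffixL g v := by
  apply occursL_of_getElem
  intro j hj
  have hp : v.reverse <+: L.reverse := List.reverse_prefix.mpr hv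
  rw [hp.getElem (by simpa using hj)]
  exact occursL_getElem h (by
    have := hv.length_le
    omega)

lemma suffixL_getElem (h : SuffixL g L) {d : ℕ} (hd : d < L.length) :
    g d = L.reverse[d]'(by simpa using hd) := by
  rw [occursL_getElem h hd]
  simp

lemma suffix_of_suffixL {a b : List A} (ha : SuffixL g a) (hb : SuffixL g b)
    (hl : a.length ≤ b.length) : a <:+ b := by
  rw [← List.reverse_prefix]
  rw [ha, hb]
  have : List.range a.length = (List.range b.length).take a.length := by
    rw [List.take_range]
    congr 1
    omega
  rw [this, List.map_take]
  exact List.take_prefix _ _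

lemma singleton_infix_of_mem {x : A} {l : List A} (h : x ∈ l) : [x] <:+: l := by
  obtain ⟨s, t, rfl⟩ := List.append_of_mem h
  exact ⟨s, t, by simp⟩

lemma getElem_flatten_replicate {r : List A} (hr : 0 < r.length) (n : ℕ) {i : ℕ}
    (hi : i < ((List.replicate n r).flatten).length) :
    ((List.replicate n r).flatten)[i] = r[i % r.length]'(Nat.mod_lt _ hr) := by
  induction n generalizing i with
  | zero => simp at hi
  | succ m ih =>
    have e : (List.replicate (m + 1) r).flatten = r ++ (List.replicate m r).flatten := by
      rw [List.replicate_succ, List.flatten_cons]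
    have hi' : i < (r ++ (List.replicate m r).flatten).length := by
      rw [← e]; exact hi
    rw [List.getElem_of_eq e hi]
    by_cases h : i < r.length
    · rw [List.getElem_append_left h]
      congr 1
      exact (Nat.mod_eq_of_lt h).symm
    · rw [List.getElem_append_right (le_of_not_gt h)]
      rw [ih (by simp at hi' ⊢; omega)]
      congr 1
      conv_rhs => rw [show i = (i - r.length) + r.length by omega]
      rw [Nat.add_mod_right]

lemma period_of_prefix {r p : List A} (hr : r ≠ []) {n : ℕ}
    (hp : p <+: (List.replicate n r).flatten) {i : ℕ}
    (hi : i + r.length < p.length) :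
    p[i]'(by omega) = p[i + r.length]'hi := by
  have hr0 : 0 < r.length := List.length_pos_iff.mpr hr
  have hlen := hp.length_le
  rw [hp.getElem (by omega : i < p.length), hp.getElem hi,
    getElem_flatten_replicate hr0 n (by omega),
    getElem_flatten_replicate hr0 n (by omega)]
  congr 1
  rw [Nat.add_mod_right]

lemma getElem_idx_congr (l : List A) {i j : ℕ} (h : i < l.length) (hj : j < l.length)
    (e : i = j) : l[i] = l[j] := by subst e; rfl

end Helpers

/-- Lemma: if `(s,σ,w,η,x,u) ∈ Δ`, `y ≠ x` and
`Π(s,σ,w,η,x,u,y) ≠ ∅`, then there is a prefix `η̄` of `η` with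
`(s,σ,w,η̄,x,uy) ∈ Δ`. -/
theorem statement9 (k : ℕ) (hk : 3 ≤ k) (α : ℚ) (hα : 5 ≤ α)
    (s : ℕ → Fin k) (σ w η u : List (Fin k)) (x y : Fin k)
    (hΔ : Delta α s σ w η x u) (hyx : y ≠ x)
    (hPi : ∃ (r : List (Fin k)) (β : ℚ), PiCond α s σ w η x u y r β) :
    ∃ η' : List (Fin k), η' <+: η ∧ Delta α s σ w η' x (u ++ [y]) := by
  obtain ⟨hwne, hPF, hΓ, huniq, hxs, hxu⟩ := hΔ
  obtain ⟨r, β, hrne, hαβ, hfree_uy, p, ⟨_, hplen, hpref⟩, hsuf⟩ := hPi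
  set t := appendL s (σ ++ w ++ η ++ [x] ++ u ++ [y]) with ht
  have hR1 : 0 < r.length := List.length_pos_iff.mpr hrne
  -- |p| > 5|r|
  have hN5 : 5 * r.length < p.length := by
    have hrq : (1:ℚ) ≤ (r.length : ℚ) := by exact_mod_cast hR1
    have : ((5 * r.length : ℕ) : ℚ) < (p.length : ℚ) := by
      push_cast
      rw [hplen]
      nlinarith
    exact_mod_cast this
  -- value of t inside p
  have hval : ∀ d, (hd : d < p.length) → t d = p[p.length - 1 - d]'(by omega) := by
    intro d hd
    have h1 := occursL_getElem hsuf hd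
    rw [List.getElem_reverse] at h1
    simpa using h1.symm
  -- periodicity of the suffix p of t
  have hper : ∀ d, d + r.length < p.length → t d = t (d + r.length) := by
    intro d hd
    rw [hval d (by omega), hval (d + r.length) hd]
    have hp2 := period_of_prefix hrne hpref
      (i := p.length - 1 - (d + r.length)) (by omega)
    rw [hp2]
    exact getElem_idx_congr _ (by omega) (by omega) (by omega)
  -- suffixes of t
  have hsuf_uy : SuffixL t (u ++ [y]) :=
    suffixL_mono (suffixL_appendL s _) ⟨σ ++ w ++ η ++ [x], by simp⟩
  have hsuf_xuy : SuffixL t ([x] ++ u ++ [y]) :=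
    suffixL_mono (suffixL_appendL s _) ⟨σ ++ w ++ η, by simp⟩
  have hty : t 0 = y := by
    have h := suffixL_getElem hsuf_uy (show 0 < (u ++ [y]).length by simp)
    rw [h, List.getElem_of_eq (show (u ++ [y]).reverse = [y] ++ u.reverse by simp) (by simp)]
    simp
  have htu : ∀ j, j < u.length → t (1 + j) ∈ u := by
    intro j hj
    have h := suffixL_getElem hsuf_uy (show 1 + j < (u ++ [y]).length by simp; omega)
    rw [h, List.getElem_of_eq (show (u ++ [y]).reverse = [y] ++ u.reverse by simp)
      (by simp; omega)]
    rw [List.getElem_append_right (by simp)]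
    exact List.mem_reverse.mp (List.getElem_mem _)
  have htx : t (u.length + 1) = x := by
    have h := suffixL_getElem hsuf_xuy (show u.length + 1 < ([x] ++ u ++ [y]).length by simp)
    rw [h, List.getElem_of_eq
      (show ([x] ++ u ++ [y]).reverse = (u ++ [y]).reverse ++ [x] by simp) (by simp)]
    rw [List.getElem_append_right (by simp)]
    simp
  -- |p| > |u| + 1
  have hNU : u.length + 2 ≤ p.length := by
    by_contra h
    push_neg at h
    have hsfx : p <:+ u ++ [y] :=
      suffix_of_suffixL hsuf hsuf_uy (by simp; omega)
    exact hfree_uy r p β (le_of_lt hαβ) ⟨hrne, hplen, hpref⟩ hsfx.isInfix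
  -- |r| > |u| + 1
  have hRU : u.length + 2 ≤ r.length := by
    by_contra h
    push_neg at h
    have hd : (u.length + 1 - r.length) + r.length = u.length + 1 := by omega
    have hx0 : t (u.length + 1 - r.length) = x := by
      rw [hper _ (by omega), hd, htx]
    rcases Nat.eq_zero_or_pos (u.length + 1 - r.length) with h0 | h0
    · rw [h0, hty] at hx0
      exact hyx hx0
    · have hmem : t (u.length + 1 - r.length) ∈ u := by
        have := htu (u.length + 1 - r.length - 1) (by omega)
        rwa [show 1 + (u.length + 1 - r.length - 1) = u.length + 1 - r.length by omega] at this
      rw [hx0] at hmem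
      exact hxu (singleton_infix_of_mem hmem)
  -- the word s σ w and its relation to t
  set g1 := appendL s (σ ++ w) with hg1
  have et : t = appendL (appendL g1 η) ([x] ++ u ++ [y]) := by
    rw [ht, hg1, ← appendL_append, ← appendL_append]
    congr 1
    simp
  have ht_g1 : ∀ m, t (u.length + 2 + η.length + m) = g1 m := by
    intro m
    rw [et, appendL_ge (by simp; omega), appendL_ge (by simp; omega)]
    congr 1
    simp
    omega
  have h0occ : OccursL g1 w 0 :=
    suffixL_mono (suffixL_appendL s (σ ++ w)) ⟨σ, rfl⟩
  -- upper bound on |p| from uniqueness of w in s σ w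
  have h4 : p.length < u.length + 2 + η.length + w.length + r.length := by
    by_contra hcon
    push_neg at hcon
    have hRocc : OccursL g1 w r.length := by
      apply occursL_of_getElem
      intro j hj
      rw [occursL_getElem h0occ hj, ← ht_g1 (0 + j), ← ht_g1 (r.length + j),
        show u.length + 2 + η.length + (r.length + j)
          = (u.length + 2 + η.length + (0 + j)) + r.length by omega]
      exact hper _ (by omega)
    obtain ⟨i0, _, hiu⟩ := huniq
    have e0 := hiu 0 h0occ
    have eR := hiu r.length hRocc
    omega
  have h3R : 3 * r.length < η.length + w.length := by omega
  -- case A bound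
  have hcaseA : u.length < w.length → 30 * w.length ≤ η.length := by
    intro hlt
    have hγ := hΓ.2 (le_of_lt hlt)
    have hα1 : (1:ℚ) ≤ α := by linarith
    have hαd : α ≤ α ^ (w.length - u.length) := le_self_pow₀ hα1 (by omega)
    have h5d : (5:ℚ) ≤ α ^ (w.length - u.length) := by linarith
    have hw0 : (0:ℚ) ≤ (w.length : ℚ) := Nat.cast_nonneg _
    have h30 : (30:ℚ) * (w.length : ℚ) ≤ (α + 1) * α ^ (w.length - u.length) * w.length := by
      have h6 : (6:ℚ) ≤ α + 1 := by linarith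
      have hprod : (30:ℚ) ≤ (α + 1) * α ^ (w.length - u.length) := by nlinarith
      nlinarith
    have : ((30 * w.length : ℕ) : ℚ) ≤ (η.length : ℚ) := by
      push_cast
      linarith
    exact_mod_cast this
  have hRη : r.length ≤ η.length := by
    rcases Nat.lt_or_ge u.length w.length with hc | hc
    · have := hcaseA hc
      omega
    · omega
  -- the truncated η
  set η' := η.take (η.length - r.length) with hη'
  set ξ := η.drop (η.length - r.length) with hξ
  have hsplit : η' ++ ξ = η := List.take_append_drop _ _
  have hξlen : ξ.length = r.length := by
    rw [hξ, List.length_drop]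
    omega
  have hη'len : η'.length = η.length - r.length := by
    rw [hη', List.length_take]
    omega
  set t' := appendL s (σ ++ w ++ η' ++ [x] ++ (u ++ [y])) with ht'
  have et' : t' = appendL (appendL g1 η') ([x] ++ u ++ [y]) := by
    rw [ht', hg1, ← appendL_append, ← appendL_append]
    congr 1
    simp
  -- the key shift identity
  have hshift : ∀ n, t' n = t (n + r.length) := by
    intro n
    by_cases h : n < ([x] ++ u ++ [y]).length
    · have e1 : t' n = t n := by
        rw [et', et, appendL_lt h, appendL_lt h]
      rw [e1]
      apply hper
      simp at h
      omega
    · push_neg at h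
      rw [et', et, appendL_ge h,
        appendL_ge (by simp at h ⊢; omega : ([x] ++ u ++ [y]).length ≤ n + r.length)]
      have e2 : n + r.length - ([x] ++ u ++ [y]).length
          = (n - ([x] ++ u ++ [y]).length) + ξ.length := by
        rw [hξlen]
        omega
      rw [e2]
      conv_rhs => rw [← hsplit]
      rw [appendL_shift]
  -- relation of t to the power-free word from Δ
  have ht₀ : ∀ m, t (m + 1) = appendL s (σ ++ w ++ η ++ [x] ++ u) m := by
    intro m
    have e : t = appendL (appendL s (σ ++ w ++ η ++ [x] ++ u)) [y] := by
      rw [ht, ← appendL_append]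
    rw [e, appendL_ge (by simp)]
    simp
  refine ⟨η', List.take_prefix _ _, hwne, ?_, ⟨hwne, ?_⟩, huniq, hxs, ?_⟩
  · -- power-freeness
    intro q hq
    obtain ⟨i, hi⟩ := hq
    apply hPF q
    refine ⟨i + r.length - 1, ?_⟩
    apply occursL_of_getElem
    intro j hj
    rw [occursL_getElem hi hj]
    show t' (i + j) = _
    rw [hshift (i + j), show i + j + r.length = ((i + r.length - 1) + j) + 1 by omega,
      ht₀]
  · -- the Gamma length bound
    intro hle
    simp only [List.length_append, List.length_singleton] at hle
    have hlt : u.length < w.length := by omega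
    have hγ := hΓ.2 (le_of_lt hlt)
    have h30 := hcaseA hlt
    have h90 : 90 * r.length < 31 * η.length := by omega
    have hα0 : (0:ℚ) < α := by linarith
    have hw0 : (0:ℚ) ≤ (w.length : ℚ) := Nat.cast_nonneg _
    have hexp : w.length - (u ++ [y]).length + 1 = w.length - u.length := by
      simp only [List.length_append, List.length_singleton]
      omega
    set X : ℚ := (α + 1) * α ^ (w.length - (u ++ [y]).length) * w.length with hX
    have hX0 : (0:ℚ) ≤ X := by positivity
    have hαX : α * X ≤ (η.length : ℚ) := by
      have : α * X = (α + 1) * α ^ (w.length - u.length) * w.length := by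
        rw [hX, ← hexp, pow_succ]
        ring
      linarith [hγ, this.le, this.ge]
    have hRQ : ((r.length : ℚ)) ≤ (4/5 : ℚ) * (η.length : ℚ) := by
      have : ((90 * r.length : ℕ) : ℚ) ≤ ((31 * η.length : ℕ) : ℚ) := by
        exact_mod_cast le_of_lt h90
      push_cast at this
      linarith
    have h5X : 5 * X ≤ α * X := by nlinarith
    have hcast : ((η'.length : ℕ) : ℚ) = (η.length : ℚ) - (r.length : ℚ) := by
      rw [hη'len]
      push_cast [Nat.cast_sub hRη]
      ring
    rw [hcast]
    linarith
  · -- x does not occur in u ++ [y]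
    intro h
    have hx : x ∈ u ++ [y] := h.subset (by simp)
    rcases List.mem_append.mp hx with h1 | h1
    · exact hxu (singleton_infix_of_mem h1)
    · simp at h1
      exact hyx h1.symm


end PowerFreeFormalization
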